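/- Let ε > 0 and c > 0, and set z_max := √((-1+√(1+8cε))/(2ε)). Then 4 ∫₀^{z_max} dz / √(2c - z² - εz⁴) = 2^{5/2} / √(1+√(1+8cε)) · K((1-√(1+8cε))/(1+√(1+8cε))); equivalently, this quantity equals 2^{5/2} Φ(-8cε). (This is the period τ¹_ε(c) of the periodic orbit of energy c of the Hamiltonian E¹_ε(z₁,w₁) = w₁²/2 + z₁²/2 + εz₁⁴/2.) -/

import Mathlib

/-- The complete elliptic integral of the first kind,
`K(m) = ∫₀¹ dζ / √((1-ζ²)(1-mζ²))`, defined for `m < 1`. -/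
noncomputable def ellipticK (m : ℝ) : ℝ :=
  ∫ ζ in (0:ℝ)..1, 1 / Real.sqrt ((1 - ζ ^ 2) * (1 - m * ζ ^ 2))

/-- `Φ(x) = K((1-√(1-x))/(1+√(1-x))) / √(1+√(1-x))`, defined for `x < 1`. -/
noncomputable def Phi (x : ℝ) : ℝ :=
  ellipticK ((1 - Real.sqrt (1 - x)) / (1 + Real.sqrt (1 - x))) /
    Real.sqrt (1 + Real.sqrt (1 - x))

/-- The period `τ¹_ε(c) = 4 ∫₀^{z_max} dz/√(2c - z² - εz⁴)` of the periodic orbit of energy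
`c > 0` of the Hamiltonian `E¹_ε(z₁,w₁) = w₁²/2 + z₁²/2 + εz₁⁴/2` equals
`2^{5/2}/√(1+√(1+8cε)) · K((1-√(1+8cε))/(1+√(1+8cε)))`, i.e. equals `2^{5/2} Φ(-8cε)`. -/
theorem period_tau1 (ε c : ℝ) (hε : 0 < ε) (hc : 0 < c) :
    (4 * ∫ z in (0:ℝ)..Real.sqrt ((-1 + Real.sqrt (1 + 8 * c * ε)) / (2 * ε)),
        1 / Real.sqrt (2 * c - z ^ 2 - ε * z ^ 4)) =
      (2:ℝ) ^ ((5:ℝ) / 2) / Real.sqrt (1 + Real.sqrt (1 + 8 * c * ε)) *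
        ellipticK ((1 - Real.sqrt (1 + 8 * c * ε)) / (1 + Real.sqrt (1 + 8 * c * ε))) ∧
    (4 * ∫ z in (0:ℝ)..Real.sqrt ((-1 + Real.sqrt (1 + 8 * c * ε)) / (2 * ε)),
        1 / Real.sqrt (2 * c - z ^ 2 - ε * z ^ 4)) =
      (2:ℝ) ^ ((5:ℝ) / 2) * Phi (-(8 * c * ε)) := by
  have hs1 : (1:ℝ) < 1 + 8 * c * ε := by nlinarith
  set rs := Real.sqrt (1 + 8 * c * ε) with hrs
  have hrs2 : rs ^ 2 = 1 + 8 * c * ε := Real.sq_sqrt (by linarith)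
  have hrs0 : 0 ≤ rs := Real.sqrt_nonneg _
  have hrs1 : 1 < rs := by nlinarith [hrs2, hrs0]
  set a := (-1 + rs) / (2 * ε) with hadef
  have ha : 0 < a := div_pos (by linarith) (by linarith)
  set zm := Real.sqrt a with hzmdef
  have hzm2 : zm ^ 2 = a := Real.sq_sqrt ha.le
  have hzm : 0 < zm := Real.sqrt_pos.mpr ha
  set m := (1 - rs) / (1 + rs) with hmdef
  -- key pointwise identity
  have key : ∀ ζ : ℝ, 2 * c - (zm * ζ) ^ 2 - ε * (zm * ζ) ^ 4
      = 2 * c * ((1 - ζ ^ 2) * (1 - m * ζ ^ 2)) := by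
    intro ζ
    have h1 : (1:ℝ) + rs ≠ 0 := by linarith
    have hε' : (2:ℝ) * ε ≠ 0 := by positivity
    rw [hmdef]
    field_simp
    rw [show zm^4 = (zm^2)^2 by ring,
      hzm2, hadef]
    field_simp
    linear_combination (-ζ^2*(2 + (rs-1)*ζ^2)) * hrs2
  -- change of variables
  have hI : (∫ z in (0:ℝ)..zm, 1 / Real.sqrt (2 * c - z ^ 2 - ε * z ^ 4))
      = zm * ((Real.sqrt (2*c))⁻¹ * ellipticK m) := by
    have := intervalIntegral.smul_integral_comp_mul_left
      (fun z => 1 / Real.sqrt (2 * c - z ^ 2 - ε * z ^ 4)) zm (a := 0) (b := 1)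
    simp only [mul_zero, mul_one, smul_eq_mul] at this
    rw [← this]
    congr 1
    rw [ellipticK, ← intervalIntegral.integral_const_mul]
    apply intervalIntegral.integral_congr
    intro ζ _
    simp only
    rw [key ζ, Real.sqrt_mul (by positivity), one_div, mul_inv, one_div]
  -- coefficient identity
  have h252 : (2:ℝ) ^ ((5:ℝ)/2) = Real.sqrt 32 := by
    rw [show (32:ℝ) = 2 ^ (5:ℝ) by norm_num [show ((5:ℕ):ℝ) = (5:ℝ) by norm_num, ← Real.rpow_natCast],
      Real.sqrt_eq_rpow, ← Real.rpow_mul (by norm_num)]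
    norm_num
  have hcoef : 4 * (zm * (Real.sqrt (2*c))⁻¹) = (2:ℝ) ^ ((5:ℝ)/2) / Real.sqrt (1 + rs) := by
    rw [h252]
    have hl : 0 ≤ 4 * (zm * (Real.sqrt (2*c))⁻¹) := by positivity
    have hr : 0 ≤ Real.sqrt 32 / Real.sqrt (1 + rs) := by positivity
    have hsq : (4 * (zm * (Real.sqrt (2*c))⁻¹))^2 = (Real.sqrt 32 / Real.sqrt (1 + rs))^2 := by
      rw [mul_pow, mul_pow, div_pow, inv_pow, hzm2, Real.sq_sqrt (by positivity : (0:ℝ) ≤ 2*c),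
        Real.sq_sqrt (by norm_num : (0:ℝ) ≤ 32), Real.sq_sqrt (by linarith : (0:ℝ) ≤ 1 + rs),
        hadef]
      have h1 : (1:ℝ) + rs ≠ 0 := by linarith
      field_simp
      linear_combination (16:ℝ) * hrs2
    calc 4 * (zm * (Real.sqrt (2*c))⁻¹) = Real.sqrt ((4 * (zm * (Real.sqrt (2*c))⁻¹))^2) :=
          (Real.sqrt_sq hl).symm
      _ = Real.sqrt ((Real.sqrt 32 / Real.sqrt (1 + rs))^2) := by rw [hsq]
      _ = _ := Real.sqrt_sq hr
  have main : (4 * ∫ z in (0:ℝ)..zm, 1 / Real.sqrt (2 * c - z ^ 2 - ε * z ^ 4))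
      = (2:ℝ) ^ ((5:ℝ)/2) / Real.sqrt (1 + rs) * ellipticK m := by
    rw [hI, ← hcoef]; ring
  refine ⟨main, ?_⟩
  rw [main, Phi, show (1 - -(8*c*ε)) = 1 + 8*c*ε by ring, ← hrs, ← hmdef, div_mul_eq_mul_div]
  ring
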